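/- arXiv:2008.06677 — 2 statements merged into one kernel-verified Lean document; each statement's English description precedes it below -/
import Mathlib

section
/- Let n, m ≥ 1, let ξ ∈ ℝⁿ, let Ω ∈ ℝ^{n×n} be positive definite with decomposition Ω = D_Ω Ω̄ D_Ω, and let a, b : {1,…,m} → {1,…,n} encode m pairwise preferences (the a_k-th point preferred to the b_k-th point, with a_k ≠ b_k). Let W ∈ ℝ^{m×n} have rows W_k = e_{a_k} − e_{b_k} (difference of standard basis vectors). Then for every f ∈ ℝⁿ, the preference likelihood times the normal prior density satisfies (∏_{k=1}^m Φ₁(f_{a_k} − f_{b_k})) · φ_n(f − ξ; Ω) = Φ_m(W ξ; W Ω Wᵀ + I_m) · sun(f), where sun is the SUN_{n,m}(ξ, Ω, Ω̄ D_Ω Wᵀ, W ξ, W Ω Wᵀ + I_m) density; i.e., the exact posterior of the latent preference function values is a unified skew-normal. -/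
open MeasureTheory Real Matrix

/-- Centered multivariate normal density with covariance `S`. -/
noncomputable def gaussPdf {ι : Type*} [Fintype ι] [DecidableEq ι]
    (S : Matrix ι ι ℝ) (x : ι → ℝ) : ℝ :=
  (2 * π) ^ (-(Fintype.card ι : ℝ) / 2) * S.det ^ (-(1 : ℝ) / 2) *
    Real.exp (-(1 / 2) * (x ⬝ᵥ S⁻¹.mulVec x))

/-- Centered multivariate normal CDF with covariance `S`, evaluated at `a`. -/
noncomputable def gaussCdf {ι : Type*} [Fintype ι] [DecidableEq ι]
    (S : Matrix ι ι ℝ) (a : ι → ℝ) : ℝ :=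
  ∫ t in {t : ι → ℝ | ∀ i, t i ≤ a i}, gaussPdf S t

/-- `D_Ω`: diagonal matrix of square roots of the diagonal of `Ω`. -/
noncomputable def matD {ι : Type*} [Fintype ι] [DecidableEq ι]
    (Ω : Matrix ι ι ℝ) : Matrix ι ι ℝ :=
  Matrix.diagonal fun i => Real.sqrt (Ω i i)

/-- `Ω̄`: the correlation matrix of `Ω`, so that `Ω = D_Ω Ω̄ D_Ω`. -/
noncomputable def matCorr {ι : Type*} [Fintype ι] [DecidableEq ι]
    (Ω : Matrix ι ι ℝ) : Matrix ι ι ℝ :=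
  (matD Ω)⁻¹ * Ω * (matD Ω)⁻¹

/-- Unified skew-normal `SUN(ξ, Ω, Δ, γ, Γ)` density. -/
noncomputable def sunPdf {ι κ : Type*} [Fintype ι] [DecidableEq ι] [Fintype κ] [DecidableEq κ]
    (ξ : ι → ℝ) (Ω : Matrix ι ι ℝ) (Δ : Matrix ι κ ℝ) (γ : κ → ℝ) (Γ : Matrix κ κ ℝ)
    (z : ι → ℝ) : ℝ :=
  gaussPdf Ω (z - ξ) *
    gaussCdf (Γ - Δᵀ * (matCorr Ω)⁻¹ * Δ)
      (γ + (Δᵀ * (matCorr Ω)⁻¹ * (matD Ω)⁻¹).mulVec (z - ξ)) /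
  gaussCdf Γ γ

/-- Standard univariate normal CDF `Φ₁`. -/
noncomputable def stdNormalCdf (a : ℝ) : ℝ :=
  ∫ t in Set.Iic a, (2 * π) ^ (-(1 : ℝ) / 2) * Real.exp (-(t ^ 2) / 2)

section Aux

open scoped MatrixOrder in
/-- Quadratic lower bound for a positive definite matrix. -/
lemma posDef_lower {ι : Type*} [Fintype ι] [DecidableEq ι] {M : Matrix ι ι ℝ}
    (hM : M.PosDef) : ∃ c > 0, ∀ x : ι → ℝ, c * ∑ i, x i ^ 2 ≤ x ⬝ᵥ M.mulVec x := by
  set B := CFC.sqrt M with hB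
  have hBB : B * B = M := CFC.sqrt_mul_sqrt_self M hM.posSemidef.nonneg
  have hBsym : Bᵀ = B := by
    have := (CFC.sqrt_nonneg M).posSemidef.isHermitian
    simpa [Matrix.conjTranspose_eq_transpose_of_trivial, Matrix.IsSymm] using this
  have hdet : IsUnit B.det := by
    have h2 : B.det * B.det = M.det := by rw [← Matrix.det_mul, hBB]
    have : M.det ≠ 0 := ne_of_gt hM.det_pos
    refine isUnit_iff_ne_zero.2 fun h => this ?_
    rw [← h2, h]; ring
  set K : ℝ := ∑ i, ∑ j, (B⁻¹ i j) ^ 2 with hK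
  have hK0 : 0 ≤ K := Finset.sum_nonneg fun i _ => Finset.sum_nonneg fun j _ => sq_nonneg _
  refine ⟨1 / (K + 1), by positivity, fun x => ?_⟩
  set y := B.mulVec x with hy
  have hq : x ⬝ᵥ M.mulVec x = y ⬝ᵥ y := by
    rw [← hBB, ← Matrix.mulVec_mulVec, Matrix.dotProduct_mulVec]
    congr 1
    rw [← hBsym, Matrix.vecMul_transpose]
  have hx : x = B⁻¹.mulVec y := by
    rw [hy, Matrix.mulVec_mulVec, Matrix.nonsing_inv_mul _ hdet, Matrix.one_mulVec]
  have hyy : y ⬝ᵥ y = ∑ i, y i ^ 2 := by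
    simp [dotProduct, sq]
  have hCS : ∑ i, x i ^ 2 ≤ K * ∑ j, y j ^ 2 := by
    rw [hK, Finset.sum_mul, hx]
    apply Finset.sum_le_sum
    intro i _
    have := Finset.sum_mul_sq_le_sq_mul_sq Finset.univ (fun j => B⁻¹ i j) y
    simpa [Matrix.mulVec, dotProduct] using this
  rw [hq, hyy]
  rw [div_mul_eq_mul_div, div_le_iff₀ (by positivity)]
  calc (1 : ℝ) * ∑ i, x i ^ 2 = ∑ i, x i ^ 2 := one_mul _
    _ ≤ K * ∑ j, y j ^ 2 := hCS
    _ ≤ (∑ i, y i ^ 2) * (K + 1) := by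
        have h0 : 0 ≤ ∑ j, y j ^ 2 := Finset.sum_nonneg fun j _ => sq_nonneg _
        nlinarith

lemma continuous_quadratic {ι : Type*} [Fintype ι] [DecidableEq ι] (A : Matrix ι ι ℝ) :
    Continuous fun x : ι → ℝ => x ⬝ᵥ A.mulVec x := by
  unfold dotProduct Matrix.mulVec
  exact continuous_finset_sum _ fun i _ =>
    (continuous_apply i).mul (continuous_finset_sum _ fun j _ =>
      ((continuous_const).mul (continuous_apply j)))

lemma gaussPdf_pos {ι : Type*} [Fintype ι] [DecidableEq ι] {S : Matrix ι ι ℝ}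
    (hS : S.PosDef) (x : ι → ℝ) : 0 < gaussPdf S x := by
  unfold gaussPdf
  have h1 : (0:ℝ) < 2 * π := by positivity
  have h2 : (0:ℝ) < S.det := hS.det_pos
  positivity

lemma integrable_gaussPdf {ι : Type*} [Fintype ι] [DecidableEq ι] {S : Matrix ι ι ℝ}
    (hS : S.PosDef) : Integrable (gaussPdf S) := by
  obtain ⟨c, hc, hcb⟩ := posDef_lower hS.inv
  set K : ℝ := (2 * π) ^ (-(Fintype.card ι : ℝ) / 2) * S.det ^ (-(1 : ℝ) / 2) with hKdef
  have hK : 0 < K := by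
    have h1 : (0:ℝ) < 2 * π := by positivity
    have h2 : (0:ℝ) < S.det := hS.det_pos
    positivity
  have hg : Integrable (fun x : ι → ℝ => K * ∏ i, Real.exp (-(c/2) * x i ^ 2)) := by
    apply Integrable.const_mul
    exact Integrable.fintype_prod (f := fun (_ : ι) (t : ℝ) => Real.exp (-(c/2) * t ^ 2))
      (fun i => by simpa using integrable_exp_neg_mul_sq (by positivity : (0:ℝ) < c/2))
  refine hg.mono' ?_ ?_
  · refine Continuous.aestronglyMeasurable ?_
    unfold gaussPdf
    exact continuous_const.mul (continuous_const.mul (continuous_quadratic S⁻¹)).rexp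
  · refine Filter.Eventually.of_forall fun x => ?_
    have hb := hcb x
    have hexp : Real.exp (-(1/2) * (x ⬝ᵥ S⁻¹.mulVec x)) ≤
        ∏ i, Real.exp (-(c/2) * x i ^ 2) := by
      rw [← Real.exp_sum]
      apply Real.exp_le_exp.2
      have : ∑ i, -(c/2) * x i ^ 2 = -(1/2) * (c * ∑ i, x i ^ 2) := by
        rw [Finset.mul_sum, Finset.mul_sum]
        apply Finset.sum_congr rfl; intro i _; ring
      rw [this]
      nlinarith
    have : ‖gaussPdf S x‖ = gaussPdf S x := Real.norm_of_nonneg (le_of_lt (gaussPdf_pos hS x))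
    rw [this]
    unfold gaussPdf
    rw [← hKdef]
    exact mul_le_mul_of_nonneg_left hexp (le_of_lt hK)

lemma gaussCdf_pos {ι : Type*} [Fintype ι] [DecidableEq ι] {S : Matrix ι ι ℝ}
    (hS : S.PosDef) (a : ι → ℝ) : 0 < gaussCdf S a := by
  have hms : MeasurableSet {t : ι → ℝ | ∀ i, t i ≤ a i} := by
    have : {t : ι → ℝ | ∀ i, t i ≤ a i} = ⋂ i, (fun t : ι → ℝ => t i) ⁻¹' Set.Iic (a i) := by
      ext t; simp
    rw [this]
    exact MeasurableSet.iInter fun i => (measurable_pi_apply i) measurableSet_Iic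
  unfold gaussCdf
  rw [setIntegral_pos_iff_support_of_nonneg_ae
    (Filter.Eventually.of_forall fun x => le_of_lt (gaussPdf_pos hS x))
    ((integrable_gaussPdf hS).integrableOn)]
  have hsupp : Function.support (gaussPdf S) = Set.univ := by
    ext x; simp [Function.mem_support, ne_of_gt (gaussPdf_pos hS x)]
  rw [hsupp, Set.univ_inter]
  have : {t : ι → ℝ | ∀ i, t i ≤ a i} = Set.pi Set.univ fun i => Set.Iic (a i) := by
    ext t; simp [Set.mem_pi, Pi.le_def]
  rw [this, volume_pi_pi]
  rw [CanonicallyOrderedAdd.prod_pos]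
  intro i _
  simp [Real.volume_Iic]

lemma gaussPdf_one {ι : Type*} [Fintype ι] [DecidableEq ι] (t : ι → ℝ) :
    gaussPdf (1 : Matrix ι ι ℝ) t
      = ∏ i, (2 * π) ^ (-(1 : ℝ) / 2) * Real.exp (-(t i ^ 2) / 2) := by
  unfold gaussPdf
  rw [inv_one, Matrix.det_one, Matrix.one_mulVec, Real.one_rpow, mul_one]
  rw [Finset.prod_mul_distrib, Finset.prod_const]
  have hpi : (0:ℝ) ≤ 2 * π := by positivity
  have h1 : (2 * π) ^ (-(Fintype.card ι : ℝ) / 2)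
      = ((2 * π) ^ (-(1:ℝ) / 2)) ^ Fintype.card ι := by
    rw [← Real.rpow_natCast ((2 * π) ^ (-(1:ℝ)/2)) (Fintype.card ι), ← Real.rpow_mul hpi]
    congr 1; ring
  have h2 : Real.exp (-(1 / 2) * (t ⬝ᵥ t)) = ∏ i, Real.exp (-(t i ^ 2) / 2) := by
    rw [← Real.exp_sum]
    congr 1
    unfold dotProduct
    rw [Finset.mul_sum]
    apply Finset.sum_congr rfl; intro i _; ring
  rw [h1, h2, Finset.card_univ]

lemma gaussCdf_one {ι : Type*} [Fintype ι] [DecidableEq ι] (a : ι → ℝ) :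
    gaussCdf (1 : Matrix ι ι ℝ) a = ∏ i, stdNormalCdf (a i) := by
  unfold gaussCdf
  have hms : MeasurableSet {t : ι → ℝ | ∀ i, t i ≤ a i} := by
    have : {t : ι → ℝ | ∀ i, t i ≤ a i} = ⋂ i, (fun t : ι → ℝ => t i) ⁻¹' Set.Iic (a i) := by
      ext t; simp
    rw [this]
    exact MeasurableSet.iInter fun i => (measurable_pi_apply i) measurableSet_Iic
  rw [← integral_indicator hms]
  have hfun : {t : ι → ℝ | ∀ i, t i ≤ a i}.indicator (gaussPdf (1 : Matrix ι ι ℝ))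
      = fun t : ι → ℝ => ∏ i, (Set.Iic (a i)).indicator
          (fun u : ℝ => (2 * π) ^ (-(1:ℝ) / 2) * Real.exp (-(u ^ 2) / 2)) (t i) := by
    funext t
    by_cases h : ∀ i, t i ≤ a i
    · rw [Set.indicator_of_mem (show t ∈ {t : ι → ℝ | ∀ i, t i ≤ a i} from h), gaussPdf_one]
      exact Finset.prod_congr rfl fun i _ => (Set.indicator_of_mem
        (show t i ∈ Set.Iic (a i) from h i)
        (fun u : ℝ => (2 * π) ^ (-(1:ℝ) / 2) * Real.exp (-(u ^ 2) / 2))).symm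
    · rw [Set.indicator_of_notMem (show t ∉ {t : ι → ℝ | ∀ i, t i ≤ a i} from h)]
      push_neg at h
      obtain ⟨i, hi⟩ := h
      exact (Finset.prod_eq_zero (Finset.mem_univ i)
        (Set.indicator_of_notMem (show t i ∉ Set.Iic (a i) by simpa using hi) _)).symm
  rw [hfun, MeasureTheory.integral_fintype_prod_volume_eq_prod]
  exact Finset.prod_congr rfl fun i _ => by
    rw [integral_indicator measurableSet_Iic]; rfl

end Aux

/-- the exact posterior of the latent preference-function values is a unified
skew-normal: the preference likelihood `∏ₖ Φ₁(f_{aₖ} − f_{bₖ})` times the normal prior density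
equals `Φ_m(W ξ; W Ω Wᵀ + I_m)` times the `SUN_{n,m}(ξ, Ω, Ω̄ D_Ω Wᵀ, W ξ, W Ω Wᵀ + I_m)`
density, where `W` has rows `e_{aₖ} − e_{bₖ}`. -/
theorem preference_posterior_is_sun (n m : ℕ) (hn : 1 ≤ n) (hm : 1 ≤ m)
    (ξ : Fin n → ℝ) (Ω : Matrix (Fin n) (Fin n) ℝ) (hΩ : Ω.PosDef)
    (a b : Fin m → Fin n) (hab : ∀ k, a k ≠ b k)
    (W : Matrix (Fin m) (Fin n) ℝ)
    (hW : ∀ k j, W k j = (if j = a k then (1 : ℝ) else 0) - (if j = b k then (1 : ℝ) else 0)) :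
    ∀ f : Fin n → ℝ,
      (∏ k : Fin m, stdNormalCdf (f (a k) - f (b k))) * gaussPdf Ω (f - ξ) =
        gaussCdf (W * Ω * Wᵀ + 1) (W.mulVec ξ) *
          sunPdf ξ Ω (matCorr Ω * matD Ω * Wᵀ) (W.mulVec ξ) (W * Ω * Wᵀ + 1) f := by
  intro f
  set D := matD Ω with hDdef
  set C := matCorr Ω with hCdef
  -- positivity of the diagonal of Ω
  have hdiag : ∀ i, 0 < Ω i i := by
    intro i
    have hne : (Pi.single i 1 : Fin n → ℝ) ≠ 0 := by
      intro h
      simpa using congr_fun h i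
    have := hΩ.dotProduct_mulVec_pos hne
    simpa [dotProduct, Matrix.mulVec, Pi.single_apply, Finset.sum_ite_eq,
      Finset.mul_sum, mul_ite] using this
  -- D is invertible
  have hDdet : IsUnit D.det := by
    rw [hDdef]
    unfold matD
    rw [Matrix.det_diagonal]
    exact isUnit_iff_ne_zero.2 (Finset.prod_ne_zero_iff.2 fun i _ =>
      ne_of_gt (Real.sqrt_pos.2 (hdiag i)))
  have hD1 : D⁻¹ * D = 1 := Matrix.nonsing_inv_mul _ hDdet
  have hD2 : D * D⁻¹ = 1 := Matrix.mul_nonsing_inv _ hDdet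
  have hΩdet : IsUnit Ω.det := isUnit_iff_ne_zero.2 (ne_of_gt hΩ.det_pos)
  have hO1 : Ω⁻¹ * Ω = 1 := Matrix.nonsing_inv_mul _ hΩdet
  have hO2 : Ω * Ω⁻¹ = 1 := Matrix.mul_nonsing_inv _ hΩdet
  have hD1' : ∀ {κ : Type} (X : Matrix (Fin n) κ ℝ), D⁻¹ * (D * X) = X := fun X => by
    rw [← Matrix.mul_assoc, hD1, Matrix.one_mul]
  have hD2' : ∀ {κ : Type} (X : Matrix (Fin n) κ ℝ), D * (D⁻¹ * X) = X := fun X => by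
    rw [← Matrix.mul_assoc, hD2, Matrix.one_mul]
  have hO1' : ∀ {κ : Type} (X : Matrix (Fin n) κ ℝ), Ω⁻¹ * (Ω * X) = X := fun X => by
    rw [← Matrix.mul_assoc, hO1, Matrix.one_mul]
  have hO2' : ∀ {κ : Type} (X : Matrix (Fin n) κ ℝ), Ω * (Ω⁻¹ * X) = X := fun X => by
    rw [← Matrix.mul_assoc, hO2, Matrix.one_mul]
  -- transposes
  have hΩt : Ωᵀ = Ω := by
    rw [← Matrix.conjTranspose_eq_transpose_of_trivial]
    exact hΩ.isHermitian
  have hDt : Dᵀ = D := by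
    rw [hDdef]; unfold matD; exact Matrix.diagonal_transpose _
  have hDinvt : (D⁻¹)ᵀ = D⁻¹ := by rw [Matrix.transpose_nonsing_inv, hDt]
  have hCt : Cᵀ = C := by
    rw [hCdef]; unfold matCorr
    rw [← hDdef, Matrix.transpose_mul, Matrix.transpose_mul, hDinvt, hΩt, Matrix.mul_assoc]
  -- inverse of the correlation matrix
  have hCinv : C⁻¹ = D * Ω⁻¹ * D := by
    apply Matrix.inv_eq_right_inv
    rw [hCdef]; unfold matCorr; rw [← hDdef]
    simp only [Matrix.mul_assoc, hD1', hD2', hO1', hO2', hD1, hD2, hO1, hO2,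
      Matrix.mul_one, Matrix.one_mul]
  -- key matrix identities
  have hΔt : (C * D * Wᵀ)ᵀ = W * (D * C) := by
    rw [Matrix.transpose_mul, Matrix.transpose_mul, Matrix.transpose_transpose, hCt, hDt]
  have hkey1 : (C * D * Wᵀ)ᵀ * C⁻¹ * (C * D * Wᵀ) = W * Ω * Wᵀ := by
    rw [hΔt, hCinv, hCdef]; unfold matCorr; rw [← hDdef]
    simp only [Matrix.mul_assoc, hD1', hD2', hO1', hO2', hD1, hD2, hO1, hO2,
      Matrix.mul_one, Matrix.one_mul]
  have hkey2 : (C * D * Wᵀ)ᵀ * C⁻¹ * D⁻¹ = W := by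
    rw [hΔt, hCinv, hCdef]; unfold matCorr; rw [← hDdef]
    simp only [Matrix.mul_assoc, hD1', hD2', hO1', hO2', hD1, hD2, hO1, hO2,
      Matrix.mul_one, Matrix.one_mul]
  -- positive definiteness of Γ = W Ω Wᵀ + 1
  have hΓ : (W * Ω * Wᵀ + 1).PosDef := by
    have hsemi : (W * Ω * Wᵀ).PosSemidef := by
      have := hΩ.posSemidef.mul_mul_conjTranspose_same W
      rwa [Matrix.conjTranspose_eq_transpose_of_trivial] at this
    exact Matrix.PosDef.posSemidef_add hsemi Matrix.PosDef.one
  have hcdf : 0 < gaussCdf (W * Ω * Wᵀ + 1) (W.mulVec ξ) := gaussCdf_pos hΓ _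
  -- W applied to a vector
  have hWf : ∀ k, W.mulVec f k = f (a k) - f (b k) := by
    intro k
    simp [Matrix.mulVec, dotProduct, hW, sub_mul, Finset.sum_sub_distrib,
      Finset.sum_ite_eq]
  -- assemble
  unfold sunPdf
  rw [← hCdef, ← hDdef, hkey1, hkey2]
  have hmatΓ : W * Ω * Wᵀ + 1 - (W * Ω * Wᵀ) = 1 := add_sub_cancel_left (W * Ω * Wᵀ) 1
  rw [hmatΓ]
  have harg : W.mulVec ξ + W.mulVec (f - ξ) = W.mulVec f := by
    rw [Matrix.mulVec_sub]
    abel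
  rw [harg, gaussCdf_one]
  have hprod : ∏ k, stdNormalCdf (W.mulVec f k) = ∏ k, stdNormalCdf (f (a k) - f (b k)) :=
    Finset.prod_congr rfl fun k _ => by rw [hWf k]
  rw [hprod, mul_comm (gaussCdf (W * Ω * Wᵀ + 1) (W.mulVec ξ)),
    div_mul_cancel₀ _ (ne_of_gt hcdf)]
  ring
end

section
/- Let p, s ≥ 1, and let (ξ, Ω, Δ, γ, Γ) be unified skew-normal parameters with Ω = D_Ω Ω̄ D_Ω positive definite and the block matrix M = [[Γ, Δᵀ],[Δ, Ω̄]] positive definite, and with Φ_s(γ; Γ) > 0. Then the unified skew-normal density is a probability density: ∫_{ℝ^p} sun(z) dz = 1, where sun is the SUN_{p,s}(ξ, Ω, Δ, γ, Γ) density. -/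
open MeasureTheory Real Matrix
set_option linter.unusedSectionVars false
set_option maxHeartbeats 1000000

section MatAlg
variable {ι κ : Type*} [Fintype ι] [DecidableEq ι] [Fintype κ] [DecidableEq κ]

lemma conjT (M : Matrix ι κ ℝ) : Mᴴ = Mᵀ := by
  ext i j; simp [Matrix.conjTranspose_apply]

lemma dot_swap (M : Matrix ι κ ℝ) (x : ι → ℝ) (y : κ → ℝ) :
    x ⬝ᵥ M *ᵥ y = y ⬝ᵥ Mᵀ *ᵥ x := by
  rw [Matrix.dotProduct_mulVec, dotProduct_comm, ← Matrix.mulVec_transpose]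
end MatAlg

section Gauss
variable {ι : Type*} [Fintype ι] [DecidableEq ι]

lemma exp_sum_sq_eq_prod (x : ι → ℝ) :
    Real.exp (-(1/2) * ∑ i, x i ^ 2) = ∏ i, Real.exp (-(1/2) * x i ^ 2) := by
  rw [← Real.exp_sum, Finset.mul_sum]

lemma integrable_exp_sum_sq :
    Integrable (fun x : ι → ℝ => Real.exp (-(1/2) * ∑ i, x i ^ 2)) := by
  simp only [exp_sum_sq_eq_prod]
  exact Integrable.fintype_prod
    (fun i => integrable_exp_neg_mul_sq (by norm_num : (0:ℝ) < 1/2))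

lemma integral_exp_sum_sq :
    ∫ x : ι → ℝ, Real.exp (-(1/2) * ∑ i, x i ^ 2)
      = (2*π) ^ ((Fintype.card ι : ℝ)/2) := by
  simp only [exp_sum_sq_eq_prod]
  rw [volume_pi, integral_fintype_prod_eq_pow (ι := ι) (fun x : ℝ => Real.exp (-(1/2) * x ^ 2)),
    integral_gaussian]
  rw [show π / (1/2 : ℝ) = 2*π by ring, Real.sqrt_eq_rpow,
    ← Real.rpow_natCast ((2*π) ^ ((1:ℝ)/2)) _, ← Real.rpow_mul (by positivity)]
  congr 1
  ring

lemma exp_quadForm_facts {R : Matrix ι ι ℝ} (hR : R.PosDef) :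
    (∫ x : ι → ℝ, Real.exp (-(1/2) * (x ⬝ᵥ R *ᵥ x))
      = (2*π) ^ ((Fintype.card ι : ℝ)/2) * R.det ^ (-(1:ℝ)/2))
    ∧ Integrable (fun x : ι → ℝ => Real.exp (-(1/2) * (x ⬝ᵥ R *ᵥ x))) := by
  obtain ⟨B, hBB, hBsym⟩ : ∃ B : Matrix ι ι ℝ, B * B = R ∧ Bᵀ = B := by
    open scoped MatrixOrder in
    exact ⟨CFC.sqrt R, CFC.sqrt_mul_sqrt_self R hR.posSemidef.nonneg,
      by rw [← conjT]; exact (CFC.sqrt_nonneg R).posSemidef.1⟩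
  have hdet2 : B.det * B.det = R.det := by rw [← Matrix.det_mul, hBB]
  have hdetne : B.det ≠ 0 := by
    intro h
    rw [h, mul_zero] at hdet2
    exact hR.det_pos.ne' hdet2.symm
  have quad : ∀ x : ι → ℝ, x ⬝ᵥ R *ᵥ x = ∑ i, (B *ᵥ x) i ^ 2 := by
    intro x
    rw [← hBB, ← Matrix.mulVec_mulVec, dot_swap, hBsym]
    simp [dotProduct, sq]
  have hg : Continuous (fun y : ι → ℝ => Real.exp (-(1/2) * ∑ i, y i ^ 2)) := by
    exact Real.continuous_exp.comp (continuous_const.mul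
      (continuous_finset_sum _ fun i _ => (continuous_apply i).pow 2))
  have hφc : Continuous (Matrix.toLin' B) := LinearMap.continuous_on_pi _
  have hmap : Measure.map (Matrix.toLin' B) volume
      = ENNReal.ofReal |B.det⁻¹| • volume :=
    Real.map_matrix_volume_pi_eq_smul_volume_pi hdetne
  have hcomp : ∀ x : ι → ℝ, Real.exp (-(1/2) * (x ⬝ᵥ R *ᵥ x))
      = (fun y : ι → ℝ => Real.exp (-(1/2) * ∑ i, y i ^ 2)) (Matrix.toLin' B x) := by
    intro x; simp only [Matrix.toLin'_apply, quad]
  have habs : |B.det⁻¹| = R.det ^ (-(1:ℝ)/2) := by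
    have h2 : |B.det| ^ (2:ℝ) = R.det := by
      rw [show (2:ℝ) = ((2:ℕ):ℝ) by norm_num, Real.rpow_natCast, sq_abs, sq]
      exact hdet2
    rw [abs_inv, ← h2, ← Real.rpow_mul (abs_nonneg _),
      show (2:ℝ) * (-(1)/2) = -1 by ring, Real.rpow_neg_one]
  constructor
  · calc ∫ x : ι → ℝ, Real.exp (-(1/2) * (x ⬝ᵥ R *ᵥ x))
        = ∫ x : ι → ℝ, (fun y : ι → ℝ => Real.exp (-(1/2) * ∑ i, y i ^ 2))
            (Matrix.toLin' B x) := by simp only [hcomp]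
      _ = ∫ y : ι → ℝ, Real.exp (-(1/2) * ∑ i, y i ^ 2)
            ∂(Measure.map (Matrix.toLin' B) volume) :=
        (integral_map hφc.aemeasurable hg.aestronglyMeasurable).symm
      _ = |B.det⁻¹| * ∫ y : ι → ℝ, Real.exp (-(1/2) * ∑ i, y i ^ 2) := by
        rw [hmap, integral_smul_measure, ENNReal.toReal_ofReal (abs_nonneg _),
          smul_eq_mul]
      _ = (2*π) ^ ((Fintype.card ι : ℝ)/2) * R.det ^ (-(1:ℝ)/2) := by
        rw [integral_exp_sum_sq, habs]; ring
  · have h1 : Integrable (fun y : ι → ℝ => Real.exp (-(1/2) * ∑ i, y i ^ 2))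
        (Measure.map (Matrix.toLin' B) volume) := by
      rw [hmap]
      exact integrable_exp_sum_sq.smul_measure ENNReal.ofReal_ne_top
    have h2 := (integrable_map_measure hg.aestronglyMeasurable hφc.aemeasurable).mp h1
    simpa only [Function.comp_def, ← hcomp] using h2

lemma gaussPdf_nonneg {S : Matrix ι ι ℝ} (hS : 0 ≤ S.det) (x : ι → ℝ) :
    0 ≤ gaussPdf S x := by
  unfold gaussPdf
  exact mul_nonneg (mul_nonneg (Real.rpow_nonneg (by positivity) _)
    (Real.rpow_nonneg hS _)) (Real.exp_nonneg _)

lemma integrable_gaussPdf_s5 {Q : Matrix ι ι ℝ} (hQ : Q.PosDef) :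
    Integrable (gaussPdf Q) := by
  unfold gaussPdf
  exact ((exp_quadForm_facts hQ.inv).2).const_mul _

lemma integral_gaussPdf {Q : Matrix ι ι ℝ} (hQ : Q.PosDef) :
    ∫ x : ι → ℝ, gaussPdf Q x = 1 := by
  unfold gaussPdf
  rw [MeasureTheory.integral_const_mul, (exp_quadForm_facts hQ.inv).1]
  have hdet : (0:ℝ) < Q.det := hQ.det_pos
  have hdi : Q⁻¹.det = Q.det⁻¹ := by
    rw [Matrix.det_nonsing_inv, Ring.inverse_eq_inv']
  have h1 : (Q.det⁻¹) ^ (-(1:ℝ)/2) = Q.det ^ ((1:ℝ)/2) := by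
    rw [Real.inv_rpow hdet.le, ← Real.rpow_neg hdet.le]
    norm_num
  rw [hdi, h1, mul_mul_mul_comm, ← Real.rpow_add (by positivity),
    ← Real.rpow_add hdet, show -(Fintype.card ι : ℝ)/2 + (Fintype.card ι : ℝ)/2 = 0 by ring]
  norm_num

section MatAlg2
variable {ι κ : Type*} [Fintype ι] [DecidableEq ι] [Fintype κ] [DecidableEq κ]

lemma posDef_symm {M : Matrix ι ι ℝ} (h : M.PosDef) : Mᵀ = M := by
  rw [← conjT]; exact h.1

lemma mulVec_dot (A : Matrix κ ι ℝ) (z : ι → ℝ) (w : κ → ℝ) :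
    (A *ᵥ z) ⬝ᵥ w = z ⬝ᵥ Aᵀ *ᵥ w := by
  rw [← Matrix.vecMul_transpose, ← Matrix.dotProduct_mulVec]

lemma quad_expand {M : Matrix ι ι ℝ} (hM : Mᵀ = M) (x y : ι → ℝ) :
    (x + y) ⬝ᵥ M *ᵥ (x + y) =
      x ⬝ᵥ M *ᵥ x + 2 * (y ⬝ᵥ M *ᵥ x) + y ⬝ᵥ M *ᵥ y := by
  have hxy : x ⬝ᵥ M *ᵥ y = y ⬝ᵥ M *ᵥ x := by rw [dot_swap, hM]
  simp only [Matrix.mulVec_add, dotProduct_add, add_dotProduct, hxy]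
  ring

lemma isUnit_of_posDef {M : Matrix ι ι ℝ} (h : M.PosDef) : IsUnit M := by
  rw [Matrix.isUnit_iff_isUnit_det]
  exact IsUnit.of_mul_eq_one _ (mul_inv_cancel₀ h.det_pos.ne')

lemma continuous_quadForm (M : Matrix ι ι ℝ) :
    Continuous (fun x : ι → ℝ => x ⬝ᵥ M *ᵥ x) := by
  simp only [dotProduct, Matrix.mulVec]
  exact continuous_finset_sum _ fun i _ => (continuous_apply i).mul
    (continuous_finset_sum _ fun j _ => continuous_const.mul (continuous_apply j))

lemma continuous_gaussPdf (S : Matrix ι ι ℝ) : Continuous (gaussPdf S) := by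
  unfold gaussPdf
  exact continuous_const.mul
    (Real.continuous_exp.comp (continuous_const.mul (continuous_quadForm _)))
end MatAlg2

section Conv
variable {ι κ : Type*} [Fintype ι] [DecidableEq ι] [Fintype κ] [DecidableEq κ]
variable {Ω : Matrix ι ι ℝ} {Sg : Matrix κ κ ℝ}

lemma gauss_conv_facts (hΩ : Ω.PosDef) (hSg : Sg.PosDef) (A : Matrix κ ι ℝ) (t : κ → ℝ) :
    (∫ z : ι → ℝ, gaussPdf Ω z * gaussPdf Sg (t + A *ᵥ z)
      = gaussPdf (Sg + A * Ω * Aᵀ) t)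
    ∧ Integrable (fun z : ι → ℝ => gaussPdf Ω z * gaussPdf Sg (t + A *ᵥ z)) := by
  have hΩi : (Ω⁻¹).PosDef := hΩ.inv
  have hSgi : (Sg⁻¹).PosDef := hSg.inv
  have hQsemi : (Aᵀ * Sg⁻¹ * A).PosSemidef := by
    have := hSgi.posSemidef.conjTranspose_mul_mul_same A
    rwa [conjT] at this
  have hQ : (Ω⁻¹ + Aᵀ * Sg⁻¹ * A).PosDef := hΩi.add_posSemidef hQsemi
  set Q : Matrix ι ι ℝ := Ω⁻¹ + Aᵀ * Sg⁻¹ * A with hQdef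
  have hSsemi : (A * Ω * Aᵀ).PosSemidef := by
    have := hΩ.posSemidef.mul_mul_conjTranspose_same A
    rwa [conjT] at this
  have hS : (Sg + A * Ω * Aᵀ).PosDef := hSg.add_posSemidef hSsemi
  set S : Matrix κ κ ℝ := Sg + A * Ω * Aᵀ with hSdef
  have hSgis : (Sg⁻¹)ᵀ = Sg⁻¹ := posDef_symm hSgi
  have hQs : Qᵀ = Q := posDef_symm hQ
  have hQis : (Q⁻¹)ᵀ = Q⁻¹ := posDef_symm hQ.inv
  have hQQ : Q * Q⁻¹ = 1 :=
    Matrix.mul_nonsing_inv _ (isUnit_iff_ne_zero.mpr hQ.det_pos.ne')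
  set m : ι → ℝ := (Q⁻¹ * (Aᵀ * Sg⁻¹)) *ᵥ t with hmdef
  have hQm : Q *ᵥ m = (Aᵀ * Sg⁻¹) *ᵥ t := by
    rw [hmdef, Matrix.mulVec_mulVec, ← Matrix.mul_assoc, hQQ, Matrix.one_mul]
  have hWood : S⁻¹ = Sg⁻¹ - Sg⁻¹ * A * Q⁻¹ * Aᵀ * Sg⁻¹ :=
    Matrix.add_mul_mul_inv_eq_sub _ _ _ _ (isUnit_of_posDef hSg)
      (isUnit_of_posDef hΩ) (isUnit_of_posDef hQ)
  have key : ∀ z : ι → ℝ,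
      z ⬝ᵥ Ω⁻¹ *ᵥ z + (t + A *ᵥ z) ⬝ᵥ Sg⁻¹ *ᵥ (t + A *ᵥ z)
        = (z + m) ⬝ᵥ Q *ᵥ (z + m) + t ⬝ᵥ S⁻¹ *ᵥ t := by
    intro z
    rw [quad_expand hSgis t (A *ᵥ z), quad_expand hQs z m]
    have e1 : (A *ᵥ z) ⬝ᵥ Sg⁻¹ *ᵥ (A *ᵥ z) = z ⬝ᵥ (Aᵀ * Sg⁻¹ * A) *ᵥ z := by
      rw [mulVec_dot, Matrix.mulVec_mulVec, Matrix.mulVec_mulVec, Matrix.mul_assoc]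
    have e2 : z ⬝ᵥ Q *ᵥ z = z ⬝ᵥ Ω⁻¹ *ᵥ z + z ⬝ᵥ (Aᵀ * Sg⁻¹ * A) *ᵥ z := by
      rw [hQdef, Matrix.add_mulVec, dotProduct_add]
    have e3 : m ⬝ᵥ Q *ᵥ z = (A *ᵥ z) ⬝ᵥ Sg⁻¹ *ᵥ t := by
      rw [dot_swap, hQs, hQm, ← Matrix.mulVec_mulVec, ← mulVec_dot]
    have e4 : m ⬝ᵥ Q *ᵥ m = t ⬝ᵥ (Sg⁻¹ * A * Q⁻¹ * Aᵀ * Sg⁻¹) *ᵥ t := by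
      have htr : (Q⁻¹ * (Aᵀ * Sg⁻¹))ᵀ = Sg⁻¹ * A * Q⁻¹ := by
        rw [Matrix.transpose_mul, Matrix.transpose_mul, Matrix.transpose_transpose,
          hSgis, hQis]
      rw [hQm, hmdef, mulVec_dot, Matrix.mulVec_mulVec, htr]
      simp only [Matrix.mul_assoc]
    have e5 : t ⬝ᵥ S⁻¹ *ᵥ t
        = t ⬝ᵥ Sg⁻¹ *ᵥ t - t ⬝ᵥ (Sg⁻¹ * A * Q⁻¹ * Aᵀ * Sg⁻¹) *ᵥ t := by
      rw [hWood, Matrix.sub_mulVec, dotProduct_sub]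
    rw [e1, e2, e3, e4, e5]
    ring
  have hΩdetU : IsUnit Ω.det := isUnit_iff_ne_zero.mpr hΩ.det_pos.ne'
  have hSgdetU : IsUnit Sg.det := isUnit_iff_ne_zero.mpr hSg.det_pos.ne'
  have hdet : Ω.det * Sg.det * Q.det = S.det := by
    have h1 : Ω.det * Q.det = (1 + A * (Ω * Aᵀ * Sg⁻¹)).det := by
      rw [← Matrix.det_mul]
      rw [show Ω * Q = 1 + (Ω * Aᵀ * Sg⁻¹) * A by
        rw [hQdef, Matrix.mul_add, Matrix.mul_nonsing_inv _ hΩdetU]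
        simp only [Matrix.mul_assoc]]
      exact Matrix.det_one_add_mul_comm _ _
    have h2 : (1 + A * (Ω * Aᵀ * Sg⁻¹)) * Sg = S := by
      rw [Matrix.add_mul, Matrix.one_mul, hSdef]
      simp only [Matrix.mul_assoc, Matrix.nonsing_inv_mul _ hSgdetU, Matrix.mul_one]
    calc Ω.det * Sg.det * Q.det = (Ω.det * Q.det) * Sg.det := by ring
      _ = (1 + A * (Ω * Aᵀ * Sg⁻¹)).det * Sg.det := by rw [h1]
      _ = ((1 + A * (Ω * Aᵀ * Sg⁻¹)) * Sg).det := (Matrix.det_mul _ _).symm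
      _ = S.det := by rw [h2]
  have hpt : ∀ z : ι → ℝ, gaussPdf Ω z * gaussPdf Sg (t + A *ᵥ z)
      = ((2 * π) ^ (-(Fintype.card ι : ℝ) / 2) * Ω.det ^ (-(1:ℝ)/2)
          * ((2 * π) ^ (-(Fintype.card κ : ℝ) / 2) * Sg.det ^ (-(1:ℝ)/2))
          * Real.exp (-(1/2) * (t ⬝ᵥ S⁻¹ *ᵥ t)))
        * Real.exp (-(1/2) * ((z + m) ⬝ᵥ Q *ᵥ (z + m))) := by
    intro z
    have hexp : Real.exp (-(1/2) * (z ⬝ᵥ Ω⁻¹ *ᵥ z))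
        * Real.exp (-(1/2) * ((t + A *ᵥ z) ⬝ᵥ Sg⁻¹ *ᵥ (t + A *ᵥ z)))
        = Real.exp (-(1/2) * (t ⬝ᵥ S⁻¹ *ᵥ t))
          * Real.exp (-(1/2) * ((z + m) ⬝ᵥ Q *ᵥ (z + m))) := by
      rw [← Real.exp_add, ← Real.exp_add]
      congr 1
      have h := key z
      linarith
    unfold gaussPdf
    calc (2 * π) ^ (-(Fintype.card ι : ℝ) / 2) * Ω.det ^ (-(1:ℝ)/2)
          * Real.exp (-(1/2) * (z ⬝ᵥ Ω⁻¹ *ᵥ z))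
          * ((2 * π) ^ (-(Fintype.card κ : ℝ) / 2) * Sg.det ^ (-(1:ℝ)/2)
          * Real.exp (-(1/2) * ((t + A *ᵥ z) ⬝ᵥ Sg⁻¹ *ᵥ (t + A *ᵥ z))))
        = ((2 * π) ^ (-(Fintype.card ι : ℝ) / 2) * Ω.det ^ (-(1:ℝ)/2)
          * ((2 * π) ^ (-(Fintype.card κ : ℝ) / 2) * Sg.det ^ (-(1:ℝ)/2)))
          * (Real.exp (-(1/2) * (z ⬝ᵥ Ω⁻¹ *ᵥ z))
            * Real.exp (-(1/2) * ((t + A *ᵥ z) ⬝ᵥ Sg⁻¹ *ᵥ (t + A *ᵥ z)))) := by ring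
      _ = _ := by rw [hexp]; ring
  constructor
  · have hint : ∫ z : ι → ℝ, Real.exp (-(1/2) * ((z + m) ⬝ᵥ Q *ᵥ (z + m)))
        = (2*π) ^ ((Fintype.card ι : ℝ)/2) * Q.det ^ (-(1:ℝ)/2) :=
      (MeasureTheory.integral_add_right_eq_self
        (fun z : ι → ℝ => Real.exp (-(1/2) * (z ⬝ᵥ Q *ᵥ z))) m).trans
        (exp_quadForm_facts hQ).1
    simp only [hpt]
    rw [MeasureTheory.integral_const_mul, hint]
    unfold gaussPdf
    have hSdetP : S.det ^ (-(1:ℝ)/2)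
        = Ω.det ^ (-(1:ℝ)/2) * Sg.det ^ (-(1:ℝ)/2) * Q.det ^ (-(1:ℝ)/2) := by
      rw [← hdet, Real.mul_rpow (mul_nonneg hΩ.det_pos.le hSg.det_pos.le)
        hQ.det_pos.le, Real.mul_rpow hΩ.det_pos.le hSg.det_pos.le]
    have h2π : (2*π) ^ (-(Fintype.card ι : ℝ)/2) * (2*π) ^ ((Fintype.card ι : ℝ)/2)
        = 1 := by
      rw [← Real.rpow_add (by positivity),
        show -(Fintype.card ι : ℝ)/2 + (Fintype.card ι : ℝ)/2 = 0 by ring,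
        Real.rpow_zero]
    rw [hSdetP]
    linear_combination ((2*π) ^ (-(Fintype.card κ : ℝ)/2) * Ω.det ^ (-(1:ℝ)/2)
      * Sg.det ^ (-(1:ℝ)/2) * Q.det ^ (-(1:ℝ)/2)
      * Real.exp (-(1/2) * (t ⬝ᵥ S⁻¹ *ᵥ t))) * h2π
  · simp only [hpt]
    refine Integrable.const_mul ?_ _
    exact ((MeasureTheory.measurePreserving_add_right
        (volume : MeasureTheory.Measure (ι → ℝ)) m).integrable_comp
        ((exp_quadForm_facts hQ).2).aestronglyMeasurable).mpr
        (exp_quadForm_facts hQ).2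

end Conv

section Cdf
variable {ι κ : Type*} [Fintype ι] [DecidableEq ι] [Fintype κ] [DecidableEq κ]

lemma measurableSet_octant (a : κ → ℝ) :
    MeasurableSet {t : κ → ℝ | ∀ i, t i ≤ a i} := by
  have h : {t : κ → ℝ | ∀ i, t i ≤ a i} = ⋂ i, {t : κ → ℝ | t i ≤ a i} := by
    ext t; simp
  rw [h]
  exact MeasurableSet.iInter fun i =>
    measurableSet_le (measurable_pi_apply i) measurable_const

lemma gaussCdf_shift (Sg : Matrix κ κ ℝ) (a b : κ → ℝ) :
    gaussCdf Sg (a + b)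
      = ∫ t in {t : κ → ℝ | ∀ i, t i ≤ a i}, gaussPdf Sg (t + b) := by
  unfold gaussCdf
  rw [← MeasureTheory.integral_indicator (measurableSet_octant (a + b)),
    ← MeasureTheory.integral_add_right_eq_self
      (Set.indicator {t : κ → ℝ | ∀ i, t i ≤ (a + b) i} (gaussPdf Sg)) b,
    ← MeasureTheory.integral_indicator (measurableSet_octant a)]
  congr 1
  funext t
  have hiff : (t + b ∈ {u : κ → ℝ | ∀ i, u i ≤ (a + b) i})
      ↔ (t ∈ {u : κ → ℝ | ∀ i, u i ≤ a i}) := by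
    simp only [Set.mem_setOf_eq, Pi.add_apply]
    exact forall_congr' fun i => add_le_add_iff_right _
  rw [Set.indicator_apply, Set.indicator_apply, if_congr hiff rfl rfl]

lemma key_fubini {Ω : Matrix ι ι ℝ} {Sg : Matrix κ κ ℝ}
    (hΩ : Ω.PosDef) (hSg : Sg.PosDef) (A : Matrix κ ι ℝ) (γ : κ → ℝ) :
    ∫ w : ι → ℝ, gaussPdf Ω w * gaussCdf Sg (γ + A *ᵥ w)
      = ∫ t in {t : κ → ℝ | ∀ i, t i ≤ γ i}, gaussPdf (Sg + A * Ω * Aᵀ) t := by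
  have hcont : Continuous (fun q : (ι → ℝ) × (κ → ℝ) =>
      gaussPdf Ω q.1 * gaussPdf Sg (q.2 + A *ᵥ q.1)) := by
    apply Continuous.mul
    · exact (continuous_gaussPdf Ω).comp continuous_fst
    · refine (continuous_gaussPdf Sg).comp (continuous_snd.add ?_)
      have h : Continuous (A.mulVecLin) := LinearMap.continuous_on_pi _
      exact h.comp continuous_fst
  have hGmeas : AEStronglyMeasurable (fun q : (ι → ℝ) × (κ → ℝ) =>
      gaussPdf Ω q.1 * gaussPdf Sg (q.2 + A *ᵥ q.1))
      (volume.prod (volume.restrict {t : κ → ℝ | ∀ i, t i ≤ γ i})) :=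
    hcont.aestronglyMeasurable
  have htransInt : ∀ w : ι → ℝ,
      Integrable (fun t : κ → ℝ => gaussPdf Sg (t + A *ᵥ w)) :=
    fun w => ((MeasureTheory.measurePreserving_add_right
      (volume : Measure (κ → ℝ)) (A *ᵥ w)).integrable_comp
      (integrable_gaussPdf_s5 hSg).aestronglyMeasurable).mpr (integrable_gaussPdf_s5 hSg)
  have htransTot : ∀ w : ι → ℝ,
      ∫ t : κ → ℝ, gaussPdf Sg (t + A *ᵥ w) = 1 :=
    fun w => (MeasureTheory.integral_add_right_eq_self
      (gaussPdf Sg) (A *ᵥ w)).trans (integral_gaussPdf hSg)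
  have hInt : Integrable (Function.uncurry fun (w : ι → ℝ) (t : κ → ℝ) =>
      gaussPdf Ω w * gaussPdf Sg (t + A *ᵥ w))
      (volume.prod (volume.restrict {t : κ → ℝ | ∀ i, t i ≤ γ i})) := by
    rw [show (Function.uncurry fun (w : ι → ℝ) (t : κ → ℝ) =>
        gaussPdf Ω w * gaussPdf Sg (t + A *ᵥ w))
        = (fun q : (ι → ℝ) × (κ → ℝ) => gaussPdf Ω q.1 * gaussPdf Sg (q.2 + A *ᵥ q.1))
        from rfl]
    rw [MeasureTheory.integrable_prod_iff hGmeas]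
    constructor
    · refine Filter.Eventually.of_forall fun w => ?_
      have h : Integrable (fun t : κ → ℝ => gaussPdf Ω w * gaussPdf Sg (t + A *ᵥ w))
          (volume.restrict {t : κ → ℝ | ∀ i, t i ≤ γ i}) :=
        ((htransInt w).restrict).const_mul _
      exact h
    · have hbd : ∀ w : ι → ℝ,
          ‖∫ t, ‖gaussPdf Ω w * gaussPdf Sg (t + A *ᵥ w)‖
            ∂(volume.restrict {t : κ → ℝ | ∀ i, t i ≤ γ i})‖ ≤ gaussPdf Ω w := by
        intro w
        have hnn : ∀ t : κ → ℝ, 0 ≤ gaussPdf Ω w * gaussPdf Sg (t + A *ᵥ w) :=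
          fun t => mul_nonneg (gaussPdf_nonneg hΩ.det_pos.le w)
            (gaussPdf_nonneg hSg.det_pos.le _)
        have h1 : ∫ t, ‖gaussPdf Ω w * gaussPdf Sg (t + A *ᵥ w)‖
              ∂(volume.restrict {t : κ → ℝ | ∀ i, t i ≤ γ i})
            = ∫ t, gaussPdf Ω w * gaussPdf Sg (t + A *ᵥ w)
              ∂(volume.restrict {t : κ → ℝ | ∀ i, t i ≤ γ i}) := by
          congr 1; funext t; exact Real.norm_of_nonneg (hnn t)
        have h2 : ∫ t, gaussPdf Ω w * gaussPdf Sg (t + A *ᵥ w)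
              ∂(volume.restrict {t : κ → ℝ | ∀ i, t i ≤ γ i})
            = gaussPdf Ω w * ∫ t in {t : κ → ℝ | ∀ i, t i ≤ γ i},
                gaussPdf Sg (t + A *ᵥ w) := MeasureTheory.integral_const_mul _ _
        have h3 : ∫ t in {t : κ → ℝ | ∀ i, t i ≤ γ i}, gaussPdf Sg (t + A *ᵥ w)
            ≤ ∫ t : κ → ℝ, gaussPdf Sg (t + A *ᵥ w) :=
          MeasureTheory.setIntegral_le_integral (htransInt w)
            (Filter.Eventually.of_forall fun t =>
              gaussPdf_nonneg hSg.det_pos.le _)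
        have h4 : (0:ℝ) ≤ ∫ t, gaussPdf Ω w * gaussPdf Sg (t + A *ᵥ w)
              ∂(volume.restrict {t : κ → ℝ | ∀ i, t i ≤ γ i}) :=
          MeasureTheory.integral_nonneg fun t => hnn t
        rw [h1, Real.norm_of_nonneg h4, h2]
        calc gaussPdf Ω w * ∫ t in {t : κ → ℝ | ∀ i, t i ≤ γ i},
              gaussPdf Sg (t + A *ᵥ w)
            ≤ gaussPdf Ω w * 1 := by
              refine mul_le_mul_of_nonneg_left ?_ (gaussPdf_nonneg hΩ.det_pos.le w)
              rw [← htransTot w]; exact h3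
          _ = gaussPdf Ω w := mul_one _
      exact MeasureTheory.Integrable.mono' (integrable_gaussPdf_s5 hΩ)
        (hGmeas.norm.integral_prod_right') (Filter.Eventually.of_forall hbd)
  calc ∫ w : ι → ℝ, gaussPdf Ω w * gaussCdf Sg (γ + A *ᵥ w)
      = ∫ w : ι → ℝ, ∫ t in {t : κ → ℝ | ∀ i, t i ≤ γ i},
          gaussPdf Ω w * gaussPdf Sg (t + A *ᵥ w) := by
        congr 1; funext w
        rw [gaussCdf_shift Sg γ (A *ᵥ w), ← MeasureTheory.integral_const_mul]
    _ = ∫ t in {t : κ → ℝ | ∀ i, t i ≤ γ i}, ∫ w : ι → ℝ,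
          gaussPdf Ω w * gaussPdf Sg (t + A *ᵥ w) :=
        MeasureTheory.integral_integral_swap hInt
    _ = ∫ t in {t : κ → ℝ | ∀ i, t i ≤ γ i}, gaussPdf (Sg + A * Ω * Aᵀ) t := by
        refine MeasureTheory.setIntegral_congr_fun (measurableSet_octant γ)
          fun t _ => ?_
        exact (gauss_conv_facts hΩ hSg A t).1

end Cdf

/-- the unified skew-normal density integrates to one. -/
theorem sunPdf_integrates_to_one (p s : ℕ) (hp : 1 ≤ p) (hs : 1 ≤ s)
    (ξ : Fin p → ℝ) (Ω : Matrix (Fin p) (Fin p) ℝ) (hΩ : Ω.PosDef)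
    (Δ : Matrix (Fin p) (Fin s) ℝ) (γ : Fin s → ℝ) (Γ : Matrix (Fin s) (Fin s) ℝ)
    (hM : (Matrix.fromBlocks Γ Δᵀ Δ (matCorr Ω)).PosDef)
    (hγ : 0 < gaussCdf Γ γ) :
    ∫ z : Fin p → ℝ, sunPdf ξ Ω Δ γ Γ z = 1 := by
  classical
  have hΩsym : Ωᵀ = Ω := posDef_symm hΩ
  have hdiag : ∀ i, 0 < Ω i i := by
    intro i
    have hx : (Pi.single i 1 : Fin p → ℝ) ≠ 0 := by
      intro h
      have := congrFun h i
      simp at this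
    have h := hΩ.dotProduct_mulVec_pos hx
    simpa [dotProduct, Matrix.mulVec, Pi.single_apply, mul_ite, ite_mul,
      Finset.sum_ite_eq, Finset.sum_ite_eq'] using h
  have hDdet : (matD Ω).det ≠ 0 := by
    rw [matD, Matrix.det_diagonal]
    exact Finset.prod_ne_zero_iff.mpr fun i _ => (Real.sqrt_pos.mpr (hdiag i)).ne'
  have hDU : IsUnit (matD Ω).det := isUnit_iff_ne_zero.mpr hDdet
  have hDsym : (matD Ω)ᵀ = matD Ω := Matrix.diagonal_transpose _
  have hDisym : ((matD Ω)⁻¹)ᵀ = (matD Ω)⁻¹ := by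
    rw [Matrix.transpose_nonsing_inv, hDsym]
  have hOm : matD Ω * matCorr Ω * matD Ω = Ω := by
    rw [matCorr]
    simp only [Matrix.mul_assoc]
    rw [Matrix.nonsing_inv_mul _ hDU, Matrix.mul_one,
      Matrix.mul_nonsing_inv_cancel_left _ _ hDU]
  have hObsym : (matCorr Ω)ᵀ = matCorr Ω := by
    rw [matCorr, Matrix.transpose_mul, Matrix.transpose_mul, hDisym, hΩsym]
    simp only [Matrix.mul_assoc]
  have hObPD : (matCorr Ω).PosDef := by
    refine PosDef.of_dotProduct_mulVec_pos ?_ ?_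
    · show (matCorr Ω)ᴴ = matCorr Ω
      rw [conjT]
      exact hObsym
    · intro x hx
      have hx0 : (matD Ω)⁻¹ *ᵥ x ≠ 0 := by
        intro h0
        apply hx
        have hxx : (matD Ω) *ᵥ ((matD Ω)⁻¹ *ᵥ x) = x := by
          rw [Matrix.mulVec_mulVec, Matrix.mul_nonsing_inv _ hDU, Matrix.one_mulVec]
        rw [← hxx, h0, Matrix.mulVec_zero]
      have e : x ⬝ᵥ (matCorr Ω) *ᵥ x
          = ((matD Ω)⁻¹ *ᵥ x) ⬝ᵥ Ω *ᵥ ((matD Ω)⁻¹ *ᵥ x) := by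
        rw [mulVec_dot, hDisym, matCorr, ← Matrix.mulVec_mulVec, ← Matrix.mulVec_mulVec]
      have h := hΩ.dotProduct_mulVec_pos hx0
      rw [star_trivial] at h
      rw [star_trivial, e]
      exact h
  have hObU : IsUnit (matCorr Ω).det := isUnit_iff_ne_zero.mpr hObPD.det_pos.ne'
  have hObisym : ((matCorr Ω)⁻¹)ᵀ = (matCorr Ω)⁻¹ := by
    rw [Matrix.transpose_nonsing_inv, hObsym]
  have hΓsym : Γᵀ = Γ := by
    ext i j
    have h2 := congrFun (congrFun hM.1 (Sum.inl i)) (Sum.inl j)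
    simp only [Matrix.conjTranspose_apply, Matrix.fromBlocks_apply₁₁,
      star_trivial] at h2
    simpa using h2
  have hSgPD : (Γ - Δᵀ * (matCorr Ω)⁻¹ * Δ).PosDef := by
    refine PosDef.of_dotProduct_mulVec_pos ?_ ?_
    · show (Γ - Δᵀ * (matCorr Ω)⁻¹ * Δ)ᴴ = Γ - Δᵀ * (matCorr Ω)⁻¹ * Δ
      rw [conjT, Matrix.transpose_sub, hΓsym, Matrix.transpose_mul,
        Matrix.transpose_mul, Matrix.transpose_transpose, hObisym]
      simp only [Matrix.mul_assoc]
    · intro x hx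
      set w : Fin p → ℝ := -(((matCorr Ω)⁻¹ * Δ) *ᵥ x) with hw
      have hv : (Sum.elim x w : Fin s ⊕ Fin p → ℝ) ≠ 0 := by
        intro h0
        apply hx
        funext i
        exact congrFun h0 (Sum.inl i)
      have h := hM.dotProduct_mulVec_pos hv
      rw [star_trivial, Matrix.fromBlocks_mulVec] at h
      simp only [Sum.elim_comp_inl, Sum.elim_comp_inr] at h
      have hblock : Δ *ᵥ x + (matCorr Ω) *ᵥ w = 0 := by
        rw [hw, Matrix.mulVec_neg, Matrix.mulVec_mulVec,
          Matrix.mul_nonsing_inv_cancel_left _ _ hObU, add_neg_cancel]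
      rw [hblock, sumElim_dotProduct_sumElim, dotProduct_zero, add_zero,
        dotProduct_add] at h
      have hterm : x ⬝ᵥ Δᵀ *ᵥ w = -(x ⬝ᵥ (Δᵀ * (matCorr Ω)⁻¹ * Δ) *ᵥ x) := by
        rw [hw, Matrix.mulVec_neg, dotProduct_neg, Matrix.mulVec_mulVec,
          ← Matrix.mul_assoc]
      rw [hterm] at h
      rw [star_trivial, Matrix.sub_mulVec, dotProduct_sub]
      linarith
  have hAT : (Δᵀ * (matCorr Ω)⁻¹ * (matD Ω)⁻¹)ᵀ
      = (matD Ω)⁻¹ * ((matCorr Ω)⁻¹ * Δ) := by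
    rw [Matrix.transpose_mul, Matrix.transpose_mul, Matrix.transpose_transpose,
      hDisym, hObisym]
  have hAOA : (Δᵀ * (matCorr Ω)⁻¹ * (matD Ω)⁻¹) * Ω
        * (Δᵀ * (matCorr Ω)⁻¹ * (matD Ω)⁻¹)ᵀ
      = Δᵀ * (matCorr Ω)⁻¹ * Δ := by
    rw [hAT]
    set E := matD Ω with hE
    set N := matCorr Ω with hN
    rw [← hOm]
    simp only [Matrix.mul_assoc]
    rw [Matrix.nonsing_inv_mul_cancel_left _ _ hDU,
      Matrix.mul_nonsing_inv_cancel_left _ _ hDU,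
      Matrix.mul_nonsing_inv_cancel_left _ _ hObU, ← Matrix.mul_assoc]
  have hSum : (Γ - Δᵀ * (matCorr Ω)⁻¹ * Δ)
        + (Δᵀ * (matCorr Ω)⁻¹ * (matD Ω)⁻¹) * Ω
          * (Δᵀ * (matCorr Ω)⁻¹ * (matD Ω)⁻¹)ᵀ = Γ := by
    rw [hAOA]
    exact sub_add_cancel _ _
  have hmain : ∫ z : Fin p → ℝ, gaussPdf Ω (z - ξ)
      * gaussCdf (Γ - Δᵀ * (matCorr Ω)⁻¹ * Δ)
        (γ + (Δᵀ * (matCorr Ω)⁻¹ * (matD Ω)⁻¹) *ᵥ (z - ξ)) = gaussCdf Γ γ := by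
    have h1 := MeasureTheory.integral_sub_right_eq_self
      (μ := (volume : Measure (Fin p → ℝ)))
      (fun v : Fin p → ℝ => gaussPdf Ω v * gaussCdf (Γ - Δᵀ * (matCorr Ω)⁻¹ * Δ)
        (γ + (Δᵀ * (matCorr Ω)⁻¹ * (matD Ω)⁻¹) *ᵥ v)) ξ
    rw [h1, key_fubini hΩ hSgPD _ γ, hSum]
    rfl
  unfold sunPdf
  rw [MeasureTheory.integral_div, hmain, div_self hγ.ne']
end Gauss
end
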